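/- With the same operators f_1^±, f_2^± on the so(5) Fock space W(p) as defined by the explicit matrix elements, one has [[f_1^-, f_2^+], f_2^+] = 0 and [[f_1^+, f_2^+], f_2^-] = 2 f_1^+, i.e., the parafermion triple relations [[f_j^ξ, f_k^η], f_l^ε] = ½(ε−η)² δ_{kl} f_j^ξ − ½(ε−ξ)² δ_{jl} f_k^η hold for these instances. -/
import Mathlib

namespace StmtSO5

variable (p : ℕ)

/-- Validity of a triple `(m₁₂, m₂₂, m₁₁)`: `p ≥ m₁₂ ≥ m₁₁ ≥ m₂₂ ≥ 0`. -/
def valid (t : ℕ × ℕ × ℕ) : Prop := t.2.1 ≤ t.2.2 ∧ t.2.2 ≤ t.1 ∧ t.1 ≤ p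

instance (t : ℕ × ℕ × ℕ) : Decidable (valid p t) := by unfold valid; infer_instance

/-- The so(5) Fock space `W(p)`: the real vector space with basis the valid triples. -/
abbrev V := {t : ℕ × ℕ × ℕ // valid p t} →₀ ℝ

/-- The basis vector `|m₁₂,m₂₂;m₁₁⟩`, interpreted as `0` when the triple is out of range. -/
noncomputable def b (t : ℕ × ℕ × ℕ) : V p :=
  if h : valid p t then Finsupp.single ⟨t, h⟩ 1 else 0

/-- The inner product making the basis vectors orthonormal. -/
noncomputable def ip (u v : V p) : ℝ := u.sum fun t c => c * v t

/-- The defining matrix elements of `f₁⁺`. -/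
def F1pAction (f1p : V p →ₗ[ℝ] V p) : Prop :=
  ∀ m12 m22 m11 : ℕ, valid p (m12, m22, m11) →
    f1p (b p (m12, m22, m11)) =
      Real.sqrt (((m11 : ℝ) - m22 + 1) * ((p : ℝ) - m12)) • b p (m12 + 1, m22, m11 + 1) -
      Real.sqrt (((m12 : ℝ) - m11) * ((m22 : ℝ) + 1)) • b p (m12, m22 + 1, m11 + 1)

/-- The defining matrix elements of `f₂⁺`. -/
def F2pAction (f2p : V p →ₗ[ℝ] V p) : Prop :=
  ∀ m12 m22 m11 : ℕ, valid p (m12, m22, m11) →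
    f2p (b p (m12, m22, m11)) =
      Real.sqrt (((m12 : ℝ) - m11 + 1) * ((p : ℝ) - m12)) • b p (m12 + 1, m22, m11) +
      Real.sqrt (((m11 : ℝ) - m22) * ((m22 : ℝ) + 1)) • b p (m12, m22 + 1, m11)

/-- `g` is the adjoint (transpose with respect to the given orthonormal basis) of `f`. -/
def IsAdjoint (f g : V p →ₗ[ℝ] V p) : Prop := ∀ u v : V p, ip p (g u) v = ip p u (f v)

/-! ### Basic lemmas -/

lemma b_coe (x : {t // valid p t}) : b p ↑x = Finsupp.single x 1 := by
  unfold b; rw [dif_pos x.2]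

lemma b_apply (t : ℕ × ℕ × ℕ) (x : {t // valid p t}) :
    b p t x = if t = ↑x then 1 else 0 := by
  unfold b
  by_cases h : valid p t
  · rw [dif_pos h, Finsupp.single_apply]
    by_cases he : t = ↑x
    · rw [if_pos (Subtype.ext he), if_pos he]
    · rw [if_neg (fun hh => he (congrArg Subtype.val hh)), if_neg he]
  · rw [dif_neg h, if_neg (fun (he : t = ↑x) => h (he ▸ x.2))]; rfl

lemma ip_b_left (t : ℕ × ℕ × ℕ) (ht : valid p t) (v : V p) :
    ip p (b p t) v = v ⟨t, ht⟩ := by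
  unfold ip b
  rw [dif_pos ht, Finsupp.sum_single_index (by simp), one_mul]

lemma ip_comm (u v : V p) : ip p u v = ip p v u := by
  unfold ip Finsupp.sum
  have h1 : ∑ a ∈ u.support, u a * v a = ∑ a ∈ u.support ∪ v.support, u a * v a :=
    Finset.sum_subset Finset.subset_union_left
      (fun x _ hx => by rw [Finsupp.notMem_support_iff.mp hx, zero_mul])
  have h2 : ∑ a ∈ v.support, v a * u a = ∑ a ∈ u.support ∪ v.support, v a * u a :=
    Finset.sum_subset Finset.subset_union_right
      (fun x _ hx => by rw [Finsupp.notMem_support_iff.mp hx, zero_mul])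
  simp only []
  rw [h1, h2]
  exact Finset.sum_congr rfl fun x _ => mul_comm _ _

lemma adj_coeff {f g : V p →ₗ[ℝ] V p} (hg : IsAdjoint p f g) (u : V p)
    (x : {t // valid p t}) : g u x = ip p u (f (b p ↑x)) := by
  have h1 : ip p (b p ↑x) (g u) = g u x := ip_b_left p _ x.2 (g u)
  rw [← h1, ip_comm, hg]

/-! ### Closed forms for the adjoint operators on basis vectors -/

lemma f1m_formula {f1p f1m : V p →ₗ[ℝ] V p} (h1 : F1pAction p f1p)
    (h1m : IsAdjoint p f1p f1m) (m12 m22 m11 : ℕ) (hv : valid p (m12, m22, m11)) :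
    f1m (b p (m12, m22, m11)) =
      Real.sqrt (((m11 : ℝ) - m22) * ((p : ℝ) - m12 + 1)) • b p (m12 - 1, m22, m11 - 1) -
      Real.sqrt (((m12 : ℝ) - m11 + 1) * (m22 : ℝ)) • b p (m12, m22 - 1, m11 - 1) := by
  have w1 : m22 ≤ m11 := hv.1
  have w2 : m11 ≤ m12 := hv.2.1
  have w3 : m12 ≤ p := hv.2.2
  ext x
  rw [adj_coeff p h1m]
  obtain ⟨⟨x12, x22, x11⟩, hx⟩ := x
  have u1 : x22 ≤ x11 := hx.1
  have u2 : x11 ≤ x12 := hx.2.1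
  have u3 : x12 ≤ p := hx.2.2
  rw [h1 x12 x22 x11 hx, ip_b_left p _ hv]
  simp only [Finsupp.coe_sub, Pi.sub_apply, Finsupp.smul_apply, smul_eq_mul, b_apply,
    Prod.mk.injEq]
  by_cases hA1 : x12 + 1 = m12 ∧ x22 = m22 ∧ x11 + 1 = m11
  · obtain ⟨rfl, rfl, rfl⟩ := hA1
    split_ifs <;> try (exfalso; omega)
    simp only [mul_one, mul_zero, sub_zero]
    congr 1; push_cast; ring
  · by_cases hA2 : x12 = m12 ∧ x22 + 1 = m22 ∧ x11 + 1 = m11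
    · obtain ⟨rfl, rfl, rfl⟩ := hA2
      split_ifs <;> try (exfalso; omega)
      simp only [mul_one, mul_zero, sub_zero, zero_sub, neg_inj]
      congr 1; push_cast; ring
    · rw [if_neg hA1, if_neg hA2]
      split_ifs <;>
        simp only [mul_one, mul_zero, sub_zero, zero_sub, neg_inj, zero_mul, sub_self]
      next =>
        (obtain rfl : m22 = 0 := by omega); (obtain rfl : m11 = 0 := by omega); simp
      next =>
        (obtain rfl : m22 = 0 := by omega); (obtain rfl : m11 = 0 := by omega); simp
      next =>
        (obtain rfl : m22 = 0 := by omega); simp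

lemma f2m_formula {f2p f2m : V p →ₗ[ℝ] V p} (h2 : F2pAction p f2p)
    (h2m : IsAdjoint p f2p f2m) (m12 m22 m11 : ℕ) (hv : valid p (m12, m22, m11)) :
    f2m (b p (m12, m22, m11)) =
      Real.sqrt (((m12 : ℝ) - m11) * ((p : ℝ) - m12 + 1)) • b p (m12 - 1, m22, m11) +
      Real.sqrt (((m11 : ℝ) - m22 + 1) * (m22 : ℝ)) • b p (m12, m22 - 1, m11) := by
  have w1 : m22 ≤ m11 := hv.1
  have w2 : m11 ≤ m12 := hv.2.1
  have w3 : m12 ≤ p := hv.2.2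
  ext x
  rw [adj_coeff p h2m]
  obtain ⟨⟨x12, x22, x11⟩, hx⟩ := x
  have u1 : x22 ≤ x11 := hx.1
  have u2 : x11 ≤ x12 := hx.2.1
  have u3 : x12 ≤ p := hx.2.2
  rw [h2 x12 x22 x11 hx, ip_b_left p _ hv]
  simp only [Finsupp.coe_add, Pi.add_apply, Finsupp.smul_apply, smul_eq_mul, b_apply,
    Prod.mk.injEq]
  by_cases hA1 : x12 + 1 = m12 ∧ x22 = m22 ∧ x11 = m11
  · obtain ⟨rfl, rfl, rfl⟩ := hA1
    split_ifs <;> try (exfalso; omega)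
    simp only [mul_one, mul_zero, add_zero, zero_add]
    congr 1; push_cast; ring
  · by_cases hA2 : x12 = m12 ∧ x22 + 1 = m22 ∧ x11 = m11
    · obtain ⟨rfl, rfl, rfl⟩ := hA2
      split_ifs <;> try (exfalso; omega)
      simp only [mul_one, mul_zero, add_zero, zero_add]
      congr 1; push_cast; ring
    · rw [if_neg hA1, if_neg hA2]
      split_ifs <;>
        simp only [mul_one, mul_zero, add_zero, zero_add, zero_mul, sub_self]
      next =>
        (obtain rfl : m12 = 0 := by omega); (obtain rfl : m11 = 0 := by omega)
        (obtain rfl : m22 = 0 := by omega); simp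
      next =>
        (obtain rfl : m12 = 0 := by omega); (obtain rfl : m11 = 0 := by omega)
        (obtain rfl : m22 = 0 := by omega); simp
      next =>
        (obtain rfl : m22 = 0 := by omega); simp

/-! ### The scaled model on `ℤ³` -/

abbrev V' := (ℤ × ℤ × ℤ) →₀ ℝ

noncomputable def dl (m : ℤ × ℤ × ℤ) : V' := Finsupp.single m 1

def W (t : ℕ × ℕ × ℕ) : ℕ :=
  (t.1 - t.2.2).factorial * ((t.2.2 - t.2.1).factorial * ((t.2.1).factorial * (p - t.1).factorial))

lemma W_pos (t : ℕ × ℕ × ℕ) : 0 < W p t :=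
  Nat.mul_pos (Nat.factorial_pos _) (Nat.mul_pos (Nat.factorial_pos _)
    (Nat.mul_pos (Nat.factorial_pos _) (Nat.factorial_pos _)))

noncomputable def dcoef (t : ℕ × ℕ × ℕ) : ℝ := Real.sqrt (W p t)

lemma dcoef_pos (t : ℕ × ℕ × ℕ) : 0 < dcoef p t :=
  Real.sqrt_pos.2 (by exact_mod_cast W_pos p t)

def zeta (t : ℕ × ℕ × ℕ) : ℤ × ℤ × ℤ := ((t.1 : ℤ), (t.2.1 : ℤ), (t.2.2 : ℤ))

lemma zeta_injective : Function.Injective zeta := by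
  intro a c h
  obtain ⟨a1, a2, a3⟩ := a
  obtain ⟨c1, c2, c3⟩ := c
  simp only [zeta, Prod.mk.injEq] at h ⊢
  exact ⟨by exact_mod_cast h.1, by exact_mod_cast h.2.1, by exact_mod_cast h.2.2⟩

noncomputable def iota : V p →ₗ[ℝ] V' :=
  Finsupp.lift V' ℝ _ fun x => (dcoef p ↑x)⁻¹ • dl (zeta ↑x)

lemma iota_b (t : ℕ × ℕ × ℕ) (ht : valid p t) :
    iota p (b p t) = (dcoef p t)⁻¹ • dl (zeta t) := by
  rw [b, dif_pos ht, iota]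
  erw [Finsupp.lift_apply]
  rw [Finsupp.sum_single_index (by simp), one_smul]

lemma coef_key {K c : ℝ} {t t' : ℕ × ℕ × ℕ} (hK : 0 ≤ K) (hc : 0 ≤ c)
    (h : K * (W p t : ℝ) = c ^ 2 * (W p t' : ℝ)) :
    Real.sqrt K * (dcoef p t')⁻¹ = (dcoef p t)⁻¹ * c := by
  have h1 : Real.sqrt K * dcoef p t = c * dcoef p t' := by
    rw [dcoef, dcoef, ← Real.sqrt_mul hK, h, Real.sqrt_mul (sq_nonneg c), Real.sqrt_sq hc]
  have h2 : (0 : ℝ) < dcoef p t := dcoef_pos p t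
  have h3 : (0 : ℝ) < dcoef p t' := dcoef_pos p t'
  field_simp
  linear_combination h1

lemma term_key {K c : ℝ} {t t' : ℕ × ℕ × ℕ} {z : ℤ × ℤ × ℤ} (hK : 0 ≤ K) (hc : 0 ≤ c)
    (hvt' : valid p t') (hW : K * (W p t : ℝ) = c ^ 2 * (W p t' : ℝ)) (hz : zeta t' = z) :
    Real.sqrt K • iota p (b p t') = ((dcoef p t)⁻¹ * c) • dl z := by
  rw [iota_b p t' hvt', smul_smul, ← hz]
  congr 1
  exact coef_key p hK hc hW

/-! ### The model operators on `ℤ³` -/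

noncomputable def E1p : V' →ₗ[ℝ] V' := Finsupp.lift V' ℝ _ fun m =>
  ((p : ℝ) - m.1) • dl (m.1 + 1, m.2.1, m.2.2 + 1)
    - ((m.1 : ℝ) - m.2.2) • dl (m.1, m.2.1 + 1, m.2.2 + 1)
noncomputable def E2p : V' →ₗ[ℝ] V' := Finsupp.lift V' ℝ _ fun m =>
  ((p : ℝ) - m.1) • dl (m.1 + 1, m.2.1, m.2.2)
    + ((m.2.2 : ℝ) - m.2.1) • dl (m.1, m.2.1 + 1, m.2.2)
noncomputable def E1m : V' →ₗ[ℝ] V' := Finsupp.lift V' ℝ _ fun m =>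
  ((m.2.2 : ℝ) - m.2.1) • dl (m.1 - 1, m.2.1, m.2.2 - 1)
    - (m.2.1 : ℝ) • dl (m.1, m.2.1 - 1, m.2.2 - 1)
noncomputable def E2m : V' →ₗ[ℝ] V' := Finsupp.lift V' ℝ _ fun m =>
  ((m.1 : ℝ) - m.2.2) • dl (m.1 - 1, m.2.1, m.2.2)
    + (m.2.1 : ℝ) • dl (m.1, m.2.1 - 1, m.2.2)

lemma E1p_dl (m : ℤ × ℤ × ℤ) : E1p p (dl m) =
    ((p : ℝ) - m.1) • dl (m.1 + 1, m.2.1, m.2.2 + 1)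
      - ((m.1 : ℝ) - m.2.2) • dl (m.1, m.2.1 + 1, m.2.2 + 1) := by
  rw [E1p]; erw [Finsupp.lift_apply]
  rw [dl, Finsupp.sum_single_index (by simp), one_smul]
lemma E2p_dl (m : ℤ × ℤ × ℤ) : E2p p (dl m) =
    ((p : ℝ) - m.1) • dl (m.1 + 1, m.2.1, m.2.2)
      + ((m.2.2 : ℝ) - m.2.1) • dl (m.1, m.2.1 + 1, m.2.2) := by
  rw [E2p]; erw [Finsupp.lift_apply]
  rw [dl, Finsupp.sum_single_index (by simp), one_smul]
lemma E1m_dl (m : ℤ × ℤ × ℤ) : E1m (dl m) =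
    ((m.2.2 : ℝ) - m.2.1) • dl (m.1 - 1, m.2.1, m.2.2 - 1)
      - (m.2.1 : ℝ) • dl (m.1, m.2.1 - 1, m.2.2 - 1) := by
  rw [E1m]; erw [Finsupp.lift_apply]
  rw [dl, Finsupp.sum_single_index (by simp), one_smul]
lemma E2m_dl (m : ℤ × ℤ × ℤ) : E2m (dl m) =
    ((m.1 : ℝ) - m.2.2) • dl (m.1 - 1, m.2.1, m.2.2)
      + (m.2.1 : ℝ) • dl (m.1, m.2.1 - 1, m.2.2) := by
  rw [E2m]; erw [Finsupp.lift_apply]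
  rw [dl, Finsupp.sum_single_index (by simp), one_smul]

lemma lhom_ext_dl {N : Type*} [AddCommMonoid N] [Module ℝ N] {φ ψ : V' →ₗ[ℝ] N}
    (h : ∀ m, φ (dl m) = ψ (dl m)) : φ = ψ :=
  Finsupp.lhom_ext fun a r => by
    have hs : (Finsupp.single a r : V') = r • dl a := by
      simp [dl, Finsupp.smul_single]
    rw [hs, map_smul, map_smul, h]

lemma lhom_ext_b {N : Type*} [AddCommMonoid N] [Module ℝ N] {φ ψ : V p →ₗ[ℝ] N}
    (h : ∀ x : {t // valid p t}, φ (b p ↑x) = ψ (b p ↑x)) : φ = ψ :=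
  Finsupp.lhom_ext fun a r => by
    have hb : (Finsupp.single a r : V p) = r • b p ↑a := by
      rw [b, dif_pos a.2]
      simp [Finsupp.smul_single]
    rw [hb, map_smul, map_smul, h]

/-! ### The model relations, which hold identically on `ℤ³` -/

lemma rel1 : (E1m ∘ₗ E2p p - E2p p ∘ₗ E1m) ∘ₗ E2p p
    - E2p p ∘ₗ (E1m ∘ₗ E2p p - E2p p ∘ₗ E1m) = 0 := by
  apply lhom_ext_dl
  intro m
  obtain ⟨m1, m2, m3⟩ := m
  simp only [LinearMap.sub_apply, LinearMap.comp_apply, LinearMap.zero_apply,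
    E1m_dl, E2p_dl, map_add, map_sub, map_smul, smul_add, smul_sub, smul_smul]
  simp only [add_sub_cancel_right, sub_add_cancel]
  match_scalars <;> ring

lemma rel2 : (E1p p ∘ₗ E2p p - E2p p ∘ₗ E1p p) ∘ₗ E2m
    - E2m ∘ₗ (E1p p ∘ₗ E2p p - E2p p ∘ₗ E1p p) = (2 : ℝ) • E1p p := by
  apply lhom_ext_dl
  intro m
  obtain ⟨m1, m2, m3⟩ := m
  simp only [LinearMap.sub_apply, LinearMap.comp_apply, LinearMap.smul_apply,
    E1p_dl, E2p_dl, E2m_dl, map_add, map_sub, map_smul, smul_add, smul_sub, smul_smul]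
  simp only [add_sub_cancel_right, sub_add_cancel]
  match_scalars <;> ring

/-! ### Intertwining -/

lemma inter_f2p {f2p : V p →ₗ[ℝ] V p} (h2 : F2pAction p f2p) :
    iota p ∘ₗ f2p = E2p p ∘ₗ iota p := by
  apply lhom_ext_b
  rintro ⟨⟨m12, m22, m11⟩, hx⟩
  have w1 : m22 ≤ m11 := hx.1
  have w2 : m11 ≤ m12 := hx.2.1
  have w3 : m12 ≤ p := hx.2.2
  have c1 : (m22 : ℝ) ≤ m11 := Nat.cast_le.mpr w1
  have c2 : (m11 : ℝ) ≤ m12 := Nat.cast_le.mpr w2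
  have c3 : (m12 : ℝ) ≤ p := Nat.cast_le.mpr w3
  simp only [LinearMap.comp_apply]
  rw [h2 _ _ _ hx, map_add, map_smul, map_smul, iota_b p _ hx, map_smul, E2p_dl]
  simp only [zeta, Int.cast_natCast, smul_add, smul_smul]
  congr 1
  · by_cases hs : m12 < p
    · apply term_key p (mul_nonneg (by linarith) (by linarith)) (by linarith)
        (⟨w1, Nat.le_succ_of_le w2, hs⟩ : valid p (m12 + 1, m22, m11))
      · obtain ⟨a, rfl⟩ : ∃ a, m12 = m11 + a := ⟨m12 - m11, by omega⟩
        obtain ⟨s, rfl⟩ : ∃ s, p = m11 + a + (s + 1) := ⟨p - (m11 + a) - 1, by omega⟩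
        have r1 : m11 + a - m11 = a := by omega
        have r2 : m11 + a + (s + 1) - (m11 + a) = s + 1 := by omega
        have r3 : m11 + a + 1 - m11 = a + 1 := by omega
        have r4 : m11 + a + (s + 1) - (m11 + a + 1) = s := by omega
        simp only [W, r1, r2, r3, r4]
        push_cast [Nat.factorial_succ]
        ring
      · simp only [zeta]; push_cast; rfl
    · have hm : m12 = p := by omega
      subst hm
      simp [sub_self]
  · by_cases hb2 : m22 < m11
    · apply term_key p (mul_nonneg (by linarith) (by positivity)) (by linarith)
        (⟨hb2, w2, w3⟩ : valid p (m12, m22 + 1, m11))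
      · obtain ⟨B, rfl⟩ : ∃ B, m11 = m22 + (B + 1) := ⟨m11 - m22 - 1, by omega⟩
        have r1 : m22 + (B + 1) - m22 = B + 1 := by omega
        have r2 : m22 + (B + 1) - (m22 + 1) = B := by omega
        simp only [W, r1, r2]
        push_cast [Nat.factorial_succ]
        ring
      · simp only [zeta]; push_cast; rfl
    · have hm : m22 = m11 := by omega
      subst hm
      simp [sub_self]

lemma inter_f1p {f1p : V p →ₗ[ℝ] V p} (h1 : F1pAction p f1p) :
    iota p ∘ₗ f1p = E1p p ∘ₗ iota p := by
  apply lhom_ext_b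
  rintro ⟨⟨m12, m22, m11⟩, hx⟩
  have w1 : m22 ≤ m11 := hx.1
  have w2 : m11 ≤ m12 := hx.2.1
  have w3 : m12 ≤ p := hx.2.2
  have c1 : (m22 : ℝ) ≤ m11 := Nat.cast_le.mpr w1
  have c2 : (m11 : ℝ) ≤ m12 := Nat.cast_le.mpr w2
  have c3 : (m12 : ℝ) ≤ p := Nat.cast_le.mpr w3
  simp only [LinearMap.comp_apply]
  rw [h1 _ _ _ hx, map_sub, map_smul, map_smul, iota_b p _ hx, map_smul, E1p_dl]
  simp only [zeta, Int.cast_natCast, smul_sub, smul_smul]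
  congr 1
  · by_cases hs : m12 < p
    · apply term_key p (mul_nonneg (by linarith) (by linarith)) (by linarith)
        (⟨Nat.le_succ_of_le w1, Nat.succ_le_succ w2, hs⟩ : valid p (m12 + 1, m22, m11 + 1))
      · obtain ⟨B, rfl⟩ : ∃ B, m11 = m22 + B := ⟨m11 - m22, by omega⟩
        obtain ⟨s, rfl⟩ : ∃ s, p = m12 + (s + 1) := ⟨p - m12 - 1, by omega⟩
        have r1 : m22 + B - m22 = B := by omega
        have r2 : m22 + B + 1 - m22 = B + 1 := by omega
        have r3 : m12 + (s + 1) - m12 = s + 1 := by omega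
        have r4 : m12 + (s + 1) - (m12 + 1) = s := by omega
        have r5 : m12 + 1 - (m22 + B + 1) = m12 - (m22 + B) := by omega
        simp only [W, r1, r2, r3, r4, r5]
        push_cast [Nat.factorial_succ]
        ring
      · simp only [zeta]; push_cast; rfl
    · have hm : m12 = p := by omega
      subst hm
      simp [sub_self]
  · by_cases hb2 : m11 < m12
    · apply term_key p (mul_nonneg (by linarith) (by positivity)) (by linarith)
        (⟨Nat.succ_le_succ w1, hb2, w3⟩ : valid p (m12, m22 + 1, m11 + 1))
      · obtain ⟨A, rfl⟩ : ∃ A, m12 = m11 + (A + 1) := ⟨m12 - m11 - 1, by omega⟩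
        have r1 : m11 + (A + 1) - m11 = A + 1 := by omega
        have r2 : m11 + (A + 1) - (m11 + 1) = A := by omega
        have r3 : m11 + 1 - (m22 + 1) = m11 - m22 := by omega
        simp only [W, r1, r2, r3]
        push_cast [Nat.factorial_succ]
        ring
      · simp only [zeta]; push_cast; rfl
    · have hm : m11 = m12 := by omega
      subst hm
      simp [sub_self]

lemma inter_f1m {f1p f1m : V p →ₗ[ℝ] V p} (h1 : F1pAction p f1p)
    (h1m : IsAdjoint p f1p f1m) : iota p ∘ₗ f1m = E1m ∘ₗ iota p := by
  apply lhom_ext_b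
  rintro ⟨⟨m12, m22, m11⟩, hx⟩
  have w1 : m22 ≤ m11 := hx.1
  have w2 : m11 ≤ m12 := hx.2.1
  have w3 : m12 ≤ p := hx.2.2
  have c1 : (m22 : ℝ) ≤ m11 := Nat.cast_le.mpr w1
  have c2 : (m11 : ℝ) ≤ m12 := Nat.cast_le.mpr w2
  have c3 : (m12 : ℝ) ≤ p := Nat.cast_le.mpr w3
  simp only [LinearMap.comp_apply]
  rw [f1m_formula p h1 h1m _ _ _ hx, map_sub, map_smul, map_smul, iota_b p _ hx,
    map_smul, E1m_dl]
  simp only [zeta, Int.cast_natCast, smul_sub, smul_smul]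
  congr 1
  · by_cases hb2 : m22 < m11
    · obtain ⟨B, rfl⟩ : ∃ B, m11 = m22 + (B + 1) := ⟨m11 - m22 - 1, by omega⟩
      obtain ⟨k, rfl⟩ : ∃ k, m12 = k + 1 := ⟨m12 - 1, by omega⟩
      apply term_key p (mul_nonneg (by linarith) (by linarith)) (by linarith)
        (show valid p (k + 1 - 1, m22, m22 + (B + 1) - 1) from
          ⟨show m22 ≤ m22 + (B + 1) - 1 by omega, show m22 + (B + 1) - 1 ≤ k + 1 - 1 by omega,
           show k + 1 - 1 ≤ p by omega⟩)
      · obtain ⟨s, rfl⟩ : ∃ s, p = k + 1 + s := ⟨p - (k + 1), by omega⟩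
        have r1 : k + 1 + s - (k + 1) = s := by omega
        have r2 : k + 1 - 1 = k := by omega
        have r3 : m22 + (B + 1) - 1 = m22 + B := by omega
        have r4 : m22 + (B + 1) - m22 = B + 1 := by omega
        have r5 : m22 + B - m22 = B := by omega
        have r6 : k + 1 + s - k = s + 1 := by omega
        have r7 : k + 1 - (m22 + (B + 1)) = k - (m22 + B) := by omega
        simp only [W, r1, r2, r3, r4, r5, r6, r7]
        push_cast [Nat.factorial_succ]
        ring
      · have r2 : k + 1 - 1 = k := by omega
        have r3 : m22 + (B + 1) - 1 = m22 + B := by omega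
        simp only [zeta, r2, r3, Prod.mk.injEq]
        push_cast
        first
          | trivial
          | (and_intros <;> first | trivial | omega)
    · have hm : m22 = m11 := by omega
      subst hm
      simp [sub_self]
  · by_cases hc2 : 0 < m22
    · obtain ⟨C, rfl⟩ : ∃ C, m22 = C + 1 := ⟨m22 - 1, by omega⟩
      obtain ⟨B, rfl⟩ : ∃ B, m11 = C + 1 + B := ⟨m11 - (C + 1), by omega⟩
      obtain ⟨A, rfl⟩ : ∃ A, m12 = C + 1 + B + A := ⟨m12 - (C + 1 + B), by omega⟩
      apply term_key p (mul_nonneg (by linarith) (by positivity)) (by positivity)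
        (show valid p (C + 1 + B + A, C + 1 - 1, C + 1 + B - 1) from
          ⟨show C + 1 - 1 ≤ C + 1 + B - 1 by omega, show C + 1 + B - 1 ≤ C + 1 + B + A by omega,
           show C + 1 + B + A ≤ p by omega⟩)
      · have r1 : C + 1 - 1 = C := by omega
        have r2 : C + 1 + B - 1 = C + B := by omega
        have r3 : C + 1 + B + A - (C + 1 + B) = A := by omega
        have r4 : C + 1 + B - (C + 1) = B := by omega
        have r5 : C + 1 + B + A - (C + B) = A + 1 := by omega
        have r6 : C + B - C = B := by omega
        simp only [W, r1, r2, r3, r4, r5, r6]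
        push_cast [Nat.factorial_succ]
        ring
      · have r1 : C + 1 - 1 = C := by omega
        have r2 : C + 1 + B - 1 = C + B := by omega
        simp only [zeta, r1, r2, Prod.mk.injEq]
        push_cast
        first
          | trivial
          | (and_intros <;> first | trivial | omega)
    · have hm : m22 = 0 := by omega
      subst hm
      simp

lemma inter_f2m {f2p f2m : V p →ₗ[ℝ] V p} (h2 : F2pAction p f2p)
    (h2m : IsAdjoint p f2p f2m) : iota p ∘ₗ f2m = E2m ∘ₗ iota p := by
  apply lhom_ext_b
  rintro ⟨⟨m12, m22, m11⟩, hx⟩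
  have w1 : m22 ≤ m11 := hx.1
  have w2 : m11 ≤ m12 := hx.2.1
  have w3 : m12 ≤ p := hx.2.2
  have c1 : (m22 : ℝ) ≤ m11 := Nat.cast_le.mpr w1
  have c2 : (m11 : ℝ) ≤ m12 := Nat.cast_le.mpr w2
  have c3 : (m12 : ℝ) ≤ p := Nat.cast_le.mpr w3
  simp only [LinearMap.comp_apply]
  rw [f2m_formula p h2 h2m _ _ _ hx, map_add, map_smul, map_smul, iota_b p _ hx,
    map_smul, E2m_dl]
  simp only [zeta, Int.cast_natCast, smul_add, smul_smul]
  congr 1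
  · by_cases hb2 : m11 < m12
    · obtain ⟨A, rfl⟩ : ∃ A, m12 = m11 + (A + 1) := ⟨m12 - m11 - 1, by omega⟩
      apply term_key p (mul_nonneg (by linarith) (by linarith)) (by linarith)
        (show valid p (m11 + (A + 1) - 1, m22, m11) from
          ⟨show m22 ≤ m11 by omega, show m11 ≤ m11 + (A + 1) - 1 by omega,
           show m11 + (A + 1) - 1 ≤ p by omega⟩)
      · obtain ⟨s, rfl⟩ : ∃ s, p = m11 + (A + 1) + s := ⟨p - (m11 + (A + 1)), by omega⟩
        have r1 : m11 + (A + 1) - 1 = m11 + A := by omega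
        have r2 : m11 + (A + 1) - m11 = A + 1 := by omega
        have r3 : m11 + A - m11 = A := by omega
        have r4 : m11 + (A + 1) + s - (m11 + (A + 1)) = s := by omega
        have r5 : m11 + (A + 1) + s - (m11 + A) = s + 1 := by omega
        simp only [W, r1, r2, r3, r4, r5]
        push_cast [Nat.factorial_succ]
        ring
      · have r1 : m11 + (A + 1) - 1 = m11 + A := by omega
        simp only [zeta, r1, Prod.mk.injEq]
        push_cast
        first
          | trivial
          | (and_intros <;> first | trivial | omega)
    · have hm : m11 = m12 := by omega
      subst hm
      simp [sub_self]
  · by_cases hc2 : 0 < m22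
    · obtain ⟨C, rfl⟩ : ∃ C, m22 = C + 1 := ⟨m22 - 1, by omega⟩
      obtain ⟨B, rfl⟩ : ∃ B, m11 = C + 1 + B := ⟨m11 - (C + 1), by omega⟩
      apply term_key p (mul_nonneg (by linarith) (by positivity)) (by positivity)
        (show valid p (m12, C + 1 - 1, C + 1 + B) from
          ⟨show C + 1 - 1 ≤ C + 1 + B by omega, show C + 1 + B ≤ m12 by omega,
           show m12 ≤ p by omega⟩)
      · have r1 : C + 1 - 1 = C := by omega
        have r2 : C + 1 + B - (C + 1) = B := by omega
        have r3 : C + 1 + B - C = B + 1 := by omega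
        simp only [W, r1, r2, r3]
        push_cast [Nat.factorial_succ]
        ring
      · have r1 : C + 1 - 1 = C := by omega
        simp only [zeta, r1, Prod.mk.injEq]
        push_cast
        first
          | trivial
          | (and_intros <;> first | trivial | omega)
    · have hm : m22 = 0 := by omega
      subst hm
      simp

/-! ### Injectivity of `iota` -/

lemma iota_coord (u : V p) (x : {t // valid p t}) :
    iota p u (zeta ↑x) = (dcoef p ↑x)⁻¹ * u x := by
  have key : (Finsupp.lapply (zeta ↑x)).comp (iota p)
      = (dcoef p ↑x)⁻¹ • (Finsupp.lapply x : V p →ₗ[ℝ] ℝ) := by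
    apply lhom_ext_b
    intro y
    simp only [LinearMap.comp_apply, LinearMap.smul_apply, Finsupp.lapply_apply,
      smul_eq_mul]
    rw [iota_b p _ y.2, b_apply]
    by_cases hyx : (y : ℕ × ℕ × ℕ) = ↑x
    · rw [if_pos hyx, hyx]
      simp [dl, Finsupp.single_apply]
    · rw [if_neg hyx]
      have hz : zeta ↑y ≠ zeta ↑x := fun h => hyx (zeta_injective h)
      simp [dl, Finsupp.single_apply, hz, Finsupp.smul_apply]
  have := LinearMap.congr_fun key u
  simpa using this

lemma iota_zero {u : V p} (h : iota p u = 0) : u = 0 := by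
  ext x
  have h1 := iota_coord p u x
  rw [h] at h1
  simp only [Finsupp.coe_zero, Pi.zero_apply] at h1
  have h2 : (dcoef p ↑x)⁻¹ ≠ 0 := inv_ne_zero (ne_of_gt (dcoef_pos p ↑x))
  have := h1.symm
  rcases mul_eq_zero.mp (by linarith [this] : (dcoef p ↑x)⁻¹ * u x = 0) with h3 | h3
  · exact absurd h3 h2
  · simpa using h3

lemma comm_intertwine {a bb : V p →ₗ[ℝ] V p} {A B : V' →ₗ[ℝ] V'}
    (ha : iota p ∘ₗ a = A ∘ₗ iota p) (hb : iota p ∘ₗ bb = B ∘ₗ iota p) :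
    iota p ∘ₗ (a ∘ₗ bb - bb ∘ₗ a) = (A ∘ₗ B - B ∘ₗ A) ∘ₗ iota p := by
  have ha' := LinearMap.congr_fun ha
  have hb' := LinearMap.congr_fun hb
  simp only [LinearMap.comp_apply] at ha' hb'
  apply LinearMap.ext
  intro v
  simp only [LinearMap.comp_apply, LinearMap.sub_apply, map_sub]
  rw [ha', hb', hb', ha']

/-- the explicit so(5) operators satisfy the parafermion triple relation
instances `[[f₁⁻, f₂⁺], f₂⁺] = 0` and `[[f₁⁺, f₂⁺], f₂⁻] = 2 f₁⁺`. -/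
theorem so5_triple_relations (hp : 0 < p)
    (f1p f2p f1m f2m : V p →ₗ[ℝ] V p)
    (h1 : F1pAction p f1p) (h2 : F2pAction p f2p)
    (h1m : IsAdjoint p f1p f1m) (h2m : IsAdjoint p f2p f2m) :
    let c : (V p →ₗ[ℝ] V p) → (V p →ₗ[ℝ] V p) → (V p →ₗ[ℝ] V p) :=
      fun a b => a ∘ₗ b - b ∘ₗ a
    c (c f1m f2p) f2p = 0 ∧ c (c f1p f2p) f2m = (2 : ℝ) • f1p := by
  intro c
  have I1p := inter_f1p p h1
  have I2p := inter_f2p p h2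
  have I1m := inter_f1m p h1 h1m
  have I2m := inter_f2m p h2 h2m
  constructor
  · have J : iota p ∘ₗ c (c f1m f2p) f2p
        = ((E1m ∘ₗ E2p p - E2p p ∘ₗ E1m) ∘ₗ E2p p
            - E2p p ∘ₗ (E1m ∘ₗ E2p p - E2p p ∘ₗ E1m)) ∘ₗ iota p :=
      comm_intertwine p (comm_intertwine p I1m I2p) I2p
    rw [rel1 p, LinearMap.zero_comp] at J
    apply LinearMap.ext
    intro v
    have := LinearMap.congr_fun J v
    simp only [LinearMap.comp_apply, LinearMap.zero_apply] at this ⊢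
    exact iota_zero p this
  · have J : iota p ∘ₗ c (c f1p f2p) f2m
        = ((E1p p ∘ₗ E2p p - E2p p ∘ₗ E1p p) ∘ₗ E2m
            - E2m ∘ₗ (E1p p ∘ₗ E2p p - E2p p ∘ₗ E1p p)) ∘ₗ iota p :=
      comm_intertwine p (comm_intertwine p I1p I2p) I2m
    rw [rel2 p] at J
    apply LinearMap.ext
    intro v
    have hJ := LinearMap.congr_fun J v
    have hI := LinearMap.congr_fun I1p v
    simp only [LinearMap.comp_apply, LinearMap.smul_apply] at hJ hI
    have h0 : iota p ((c (c f1p f2p) f2m) v - (2 : ℝ) • f1p v) = 0 := by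
      rw [map_sub, map_smul, hJ, hI]
      simp
    have h1 := iota_zero p h0
    have h2 : (c (c f1p f2p) f2m) v = (2 : ℝ) • f1p v := by
      have := sub_eq_zero.mp h1
      exact this
    simpa using h2

end StmtSO5
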